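/- Let G be a subgroup of the permutation group of Fin n and let f : (Fin n → Bool) → Bool be invariant under every π ∈ G. Then f is satisfiable if and only if there exists an assignment σ with f(σ) = true and σ ≤ σ ∘ π in lexicographic order for every π ∈ G. That is, conjoining the full lex-leader symmetry breaking predicate LL-SBP of G to f preserves satisfiability. -/

import Mathlib

/-- Lexicographic order on assignments `Fin n → Bool` (earlier indices more significant,
with `false < true`). -/
def lexLe {n : ℕ} (σ τ : Fin n → Bool) : Prop :=
  σ = τ ∨ ∃ i : Fin n, (∀ j, j < i → σ j = τ j) ∧ σ i = false ∧ τ i = true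

noncomputable instance (n : ℕ) : LinearOrder (Lex (Fin n → Bool)) :=
  @Pi.Lex.linearOrder (Fin n) (fun _ => Bool) _
    (inferInstance : WellFoundedLT (Fin n)) (fun _ => inferInstance)

lemma lexLe_iff {n : ℕ} (σ τ : Fin n → Bool) : lexLe σ τ ↔ toLex σ ≤ toLex τ := by
  rw [le_iff_lt_or_eq, lexLe, or_comm]
  constructor
  · rintro (⟨i, h1, h2, h3⟩ | h)
    · exact Or.inl ⟨i, h1, by simp [h2, h3, Bool.lt_iff]⟩
    · exact Or.inr (congrArg toLex h)
  · rintro (⟨i, h1, h2⟩ | h)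
    · rw [Bool.lt_iff] at h2
      exact Or.inl ⟨i, h1, h2.1, h2.2⟩
    · exact Or.inr (congrArg ofLex h)

/-- If `f` is invariant under every permutation of a subgroup `G` of `Perm (Fin n)`,
then `f` is satisfiable iff some assignment satisfies `f` together with the full
lex-leader symmetry breaking predicate `LL-SBP` of `G`. -/
theorem stmt_5 {n : ℕ} (G : Subgroup (Equiv.Perm (Fin n)))
    (f : (Fin n → Bool) → Bool)
    (hinv : ∀ π ∈ G, ∀ σ : Fin n → Bool, f (σ ∘ π) = f σ) :
    (∃ σ : Fin n → Bool, f σ = true) ↔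
      (∃ σ : Fin n → Bool, f σ = true ∧ ∀ π ∈ G, lexLe σ (σ ∘ π)) := by
  constructor
  · rintro ⟨σ, hσ⟩
    classical
    let S : Finset (Lex (Fin n → Bool)) :=
      Finset.image (fun π : G => toLex (σ ∘ (π : Equiv.Perm (Fin n)))) Finset.univ
    have hne : S.Nonempty := ⟨toLex (σ ∘ ((1 : G) : Equiv.Perm (Fin n))),
      Finset.mem_image_of_mem _ (Finset.mem_univ _)⟩
    obtain ⟨π₀, -, hπ₀⟩ := Finset.mem_image.1 (S.min'_mem hne)
    set τ : Fin n → Bool := σ ∘ (π₀ : Equiv.Perm (Fin n)) with hτ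
    refine ⟨τ, by rw [hinv _ π₀.2, hσ], ?_⟩
    intro π hπ
    rw [lexLe_iff]
    have hmem : toLex (τ ∘ π) ∈ S := by
      have : τ ∘ π = σ ∘ ((π₀ * ⟨π, hπ⟩ : G) : Equiv.Perm (Fin n)) := by
        ext x; simp [hτ, Equiv.Perm.mul_apply]
      rw [this]
      exact Finset.mem_image_of_mem _ (Finset.mem_univ _)
    calc toLex τ = S.min' hne := hπ₀
      _ ≤ toLex (τ ∘ π) := S.min'_le _ hmem
  · rintro ⟨σ, hσ, -⟩
    exact ⟨σ, hσ⟩
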